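/- There exists a family of finite pointed sets G_{ij} (i, j ∈ ℕ) together with basepoint-preserving vertical bonding maps p_{ij} : G_{i+1,j} → G_{ij} and basepoint-preserving horizontal maps h_{ij} : G_{ij} → G_{i,j+1} satisfying h_{ij} ∘ p_{ij} = p_{i,j+1} ∘ h_{i+1,j} for all i, j, such that, setting Γ_j = lim_i G_{ij} (the pointed set of threads) with the maps Γ_j → Γ_{j+1} induced by the horizontal maps: (i) for every j and every γ ∈ Γ_j there exists k ≥ j such that the composite map Γ_j → Γ_k sends γ to the basepoint (i.e., colim_j Γ_j is trivial); but (ii) for every j and every k ≥ j the composite map Γ_j → Γ_k is not trivial (its image is not reduced to the basepoint). (Hence, for towers of pointed sets rather than groups, triviality of the colimit of the inverse limits does not imply that the bonding maps between the inverse limits are eventually trivial, even though towers of finite sets automatically satisfy the Mittag-Leffler condition.) -/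

import Mathlib

/-- The composite map `G_{i,j} → G_{i,j+k}` of the horizontal maps of a direct
sequence of towers of sets (the identity when `k = 0`). -/
def hIterPt (G : ℕ → ℕ → Type) (h : ∀ i j, G i j → G i (j + 1)) (i j : ℕ) :
    ∀ k, G i j → G i (j + k)
  | 0 => id
  | k + 1 => fun g => h i (j + k) (hIterPt G h i j k g)

namespace Stmt15

def GG (i j : ℕ) : Type := {m : Option ℕ // ∀ n, m = some n → n + j ≤ i}

def PT (i j : ℕ) : GG i j := ⟨none, by simp⟩

def PP (i j : ℕ) (g : GG (i + 1) j) : GG i j :=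
  ⟨g.1.bind (fun n => if n + j ≤ i then some n else none), by
    intro n hn
    rcases g with ⟨m, hm⟩
    cases m with
    | none => simp at hn
    | some a =>
      simp only [Option.bind_some] at hn
      split at hn
      · cases hn; omega
      · simp at hn⟩

def hval : Option ℕ → Option ℕ
  | none => none
  | some 0 => none
  | some (n + 1) => some n

def HH (i j : ℕ) (g : GG i j) : GG i (j + 1) :=
  ⟨hval g.1, by
    intro n hn
    rcases g with ⟨m, hm⟩
    match m, hm with
    | none, _ => simp [hval] at hn
    | some 0, _ => simp [hval] at hn
    | some (a + 1), hm =>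
      simp only [hval] at hn
      cases hn
      have := hm (n + 1) rfl
      omega⟩

lemma PP_val (i j : ℕ) (g : GG (i + 1) j) :
    (PP i j g).1 = g.1.bind (fun n => if n + j ≤ i then some n else none) := rfl

lemma HH_val (i j : ℕ) (g : GG i j) : (HH i j g).1 = hval g.1 := rfl

lemma hIter_val (i j k : ℕ) (x : GG i j) :
    (hIterPt GG HH i j k x).1 = x.1.bind (fun n => if k ≤ n then some (n - k) else none) := by
  induction k with
  | zero =>
    simp [hIterPt]
  | succ k ih =>
    show (HH i (j + k) (hIterPt GG HH i j k x)).1 = _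
    rw [HH_val, ih]
    cases hm : x.1 with
    | none => simp [hval]
    | some a =>
      simp only [Option.bind_some]
      split
      · rename_i hka
        rcases Nat.eq_or_lt_of_le hka with h1 | h1
        · have h0 : a - k = 0 := by omega
          rw [h0]
          show (none : Option ℕ) = _
          rw [if_neg (by omega)]
        · have h0 : a - k = (a - (k + 1)) + 1 := by omega
          rw [h0]
          show some (a - (k + 1)) = _
          rw [if_pos (by omega)]
      · show (none : Option ℕ) = _
        rw [if_neg (by omega)]

end Stmt15

namespace Stmt15

lemma finiteGG (i j : ℕ) : Finite (GG i j) := by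
  apply Finite.of_surjective (f := fun m : Option (Fin (i + 1)) =>
    match m with
    | none => PT i j
    | some a => if h : (a : ℕ) + j ≤ i then ⟨some a, by intro n hn; cases hn; exact h⟩ else PT i j)
  rintro ⟨m, hm⟩
  cases m with
  | none => exact ⟨none, rfl⟩
  | some a =>
    have ha := hm a rfl
    refine ⟨some ⟨a, by omega⟩, ?_⟩
    simp only
    exact dif_pos ha

lemma thread_aux (j : ℕ) (g : ∀ i, GG i j) (hc : ∀ i, PP i j (g (i + 1)) = g i) :
    ∀ d i, (g i).1 = none ∨ (g i).1 = (g (i + d)).1 := by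
  intro d
  induction d with
  | zero => intro i; right; rfl
  | succ d ih =>
    intro i
    have step : (g (i + d)).1 = none ∨ (g (i + d)).1 = (g (i + d + 1)).1 := by
      rw [← hc (i + d), PP_val]
      cases hm : (g (i + d + 1)).1 with
      | none => left; simp
      | some a =>
        simp only [Option.bind_some]
        split
        · right; rfl
        · left; rfl
    rcases ih i with h1 | h1
    · left; exact h1
    · rcases step with h2 | h2
      · left; rw [h1, h2]
      · right; rw [h1, h2]; rfl

/-- Thread with clock `n`. -/
def TH (n j : ℕ) (i : ℕ) : GG i j :=
  if h : n + j ≤ i then ⟨some n, by intro m hm; cases hm; exact h⟩ else PT i j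

lemma TH_val (n j i : ℕ) : (TH n j i).1 = if n + j ≤ i then some n else none := by
  unfold TH
  split <;> rename_i h0 <;> simp [h0, PT]

end Stmt15


/-- Example: there is a direct sequence of towers of finite pointed sets such that the
colimit of the inverse limits `Γ_j = lim_i G_{ij}` (pointed sets of threads) is
trivial, yet no composite map `Γ_j → Γ_k` (`k ≥ j`) is trivial. -/
theorem stmt_15 :
    ∃ (G : ℕ → ℕ → Type) (_ : ∀ i j, Finite (G i j)) (pt : ∀ i j, G i j)
      (p : ∀ i j, G (i + 1) j → G i j) (h : ∀ i j, G i j → G i (j + 1)),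
      (∀ i j, p i j (pt (i + 1) j) = pt i j) ∧
      (∀ i j, h i j (pt i j) = pt i (j + 1)) ∧
      (∀ i j (g : G (i + 1) j), h i j (p i j g) = p i (j + 1) (h (i + 1) j g)) ∧
      -- the colimit of the `Γ_j = lim_i G_{ij}` is trivial
      (∀ j (g : ∀ i, G i j), (∀ i, p i j (g (i + 1)) = g i) →
        ∃ k, ∀ i, hIterPt G h i j k (g i) = pt i (j + k)) ∧
      -- but no composite map `Γ_j → Γ_k` is trivial
      (∀ j k, ∃ g : ∀ i, G i j, (∀ i, p i j (g (i + 1)) = g i) ∧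
        ¬(∀ i, hIterPt G h i j k (g i) = pt i (j + k))) := by
  classical
  open Stmt15 in
  refine ⟨GG, finiteGG, PT, PP, HH, ?_, ?_, ?_, ?_, ?_⟩
  · intro i j; apply Subtype.ext; rfl
  · intro i j; apply Subtype.ext; rfl
  · -- commutation
    intro i j g
    apply Subtype.ext
    rw [HH_val, PP_val, PP_val, HH_val]
    cases hm : g.1 with
    | none => rfl
    | some a =>
      match a with
      | 0 =>
        show hval ((some 0).bind _) = (hval (some 0)).bind _
        rw [Option.bind_some]
        show hval (if 0 + j ≤ i then some 0 else none) = none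
        split <;> rfl
      | a + 1 =>
        show hval ((some (a + 1)).bind _) = (hval (some (a + 1))).bind _
        rw [Option.bind_some]
        show hval (if a + 1 + j ≤ i then some (a + 1) else none)
          = (some a).bind fun n => if n + (j + 1) ≤ i then some n else none
        rw [Option.bind_some]
        rcases le_or_gt (a + 1 + j) i with hle | hlt
        · rw [if_pos hle, if_pos (by omega)]
          rfl
        · rw [if_neg (by omega), if_neg (by omega)]
          rfl
  · -- colimit trivial
    intro j g hc
    by_cases hall : ∀ i, (g i).1 = none
    · exact ⟨0, fun i => Subtype.ext (by rw [hIter_val, hall i]; rfl)⟩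
    · push_neg at hall
      obtain ⟨i0, hi0⟩ := hall
      obtain ⟨n, hn⟩ : ∃ n, (g i0).1 = some n := by
        cases hm : (g i0).1 with
        | none => exact absurd hm hi0
        | some a => exact ⟨a, rfl⟩
      have key : ∀ i, (g i).1 = none ∨ (g i).1 = some n := by
        intro i
        rcases le_or_gt i i0 with hle | hlt
        · obtain ⟨d, rfl⟩ := Nat.exists_eq_add_of_le hle
          rcases thread_aux j g hc d i with h1 | h1
          · left; exact h1
          · rw [h1, hn]; right; rfl
        · obtain ⟨d, rfl⟩ := Nat.exists_eq_add_of_le hlt.le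
          rcases thread_aux j g hc d i0 with h1 | h1
          · rw [hn] at h1; exact absurd h1 (by simp)
          · right; rw [← h1, hn]
      refine ⟨n + 1, fun i => Subtype.ext ?_⟩
      rw [hIter_val]
      rcases key i with h1 | h1 <;> rw [h1]
      · rfl
      · show _ = (none : Option ℕ)
        simp only [Option.bind_some]
        rw [if_neg (by omega)]
  · -- no composite trivial
    intro j k
    refine ⟨TH k j, ?_, ?_⟩
    · intro i
      apply Subtype.ext
      rw [PP_val, TH_val, TH_val]
      rcases le_or_gt (k + j) i with hle | hlt
      · rw [if_pos (by omega), if_pos hle, Option.bind_some, if_pos hle]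
      · rcases le_or_gt (k + j) (i + 1) with hle2 | hlt2
        · rw [if_pos hle2, if_neg (by omega), Option.bind_some, if_neg (by omega)]
        · rw [if_neg (by omega), if_neg (by omega)]; rfl
    · intro H
      have := congrArg Subtype.val (H (k + j))
      rw [hIter_val, TH_val, if_pos (by omega)] at this
      simp only [Option.bind_some] at this
      rw [if_pos (by omega)] at this
      exact Option.some_ne_none _ this
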